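/- Let a = a_0 < a_1 < … < a_F = b be a partition of [a,b]. Let x_1, …, x_{n_L} ∈ [a,b] be pairwise distinct nodes with positive weights ω^L_1, …, ω^L_{n_L} forming a quadrature rule on [a,b], and for each f = 1, …, F let y^f_1, …, y^f_{n_f} ∈ [a_{f−1}, a_f] be pairwise distinct nodes with positive weights ω^f_1, …, ω^f_{n_f} forming a quadrature rule on [a_{f−1}, a_f]; here a quadrature rule with nodes z_i and weights w_i is exact of degree τ on [c,d] if Σ_i w_i q(z_i) = ∫_c^d q(t) dt for every polynomial q with deg q ≤ τ. Let d ≥ 0 be an integer with d ≤ min(n_L, n_1, …, n_F) − 1, and assume the L-quadrature is exact of degree n_L − 1 + d on [a,b] and, for each f, the f-th quadrature is exact of degree n_f − 1 + d on [a_{f−1}, a_f]. Define, for each f, the L² projection interpolation operator I_{L→R_f} = M_{R_f}⁻¹ M_{LtoR_f}, where M_{R_f}(i,j) = ∫_{a_{f−1}}^{a_f} ℓ_i^{y^f} ℓ_j^{y^f} and M_{LtoR_f}(i,j) = ∫_{a_{f−1}}^{a_f} ℓ_i^{y^f} ℓ_j^{x}, with ℓ^z denoting Lagrange basis polynomials for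 nodes z, and define I_{R_f→L} = P_L⁻¹ (I_{L→R_f})ᵀ P_{R_f}, where P_L = diag(ω^L) and P_{R_f} = diag(ω^f). Then for every polynomial p with deg p ≤ d, Σ_{f=1}^F I_{R_f→L} · ( p(y^f_1), …, p(y^f_{n_f}) )ᵀ = ( p(x_1), …, p(x_{n_L}) )ᵀ. -/

import Mathlib

open Matrix MeasureTheory intervalIntegral

lemma lagrange_interp_eval {m : ℕ} (z : Fin m → ℝ) (hz : Function.Injective z)
    (ℓ : Fin m → Polynomial ℝ) (hdeg : ∀ i, (ℓ i).degree < (m : ℕ))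
    (hev : ∀ i k, (ℓ i).eval (z k) = if i = k then 1 else 0)
    (p : Polynomial ℝ) (hp : p.degree < (m : ℕ)) (t : ℝ) :
    p.eval t = ∑ i, p.eval (z i) * (ℓ i).eval t := by
  have h : p = ∑ i, Polynomial.C (p.eval (z i)) * ℓ i := by
    set q : Polynomial ℝ := (∑ i, Polynomial.C (p.eval (z i)) * ℓ i) - p with hqdef
    have hd : q.degree < (m : ℕ) := by
      refine lt_of_le_of_lt (Polynomial.degree_sub_le _ _) (max_lt ?_ hp)
      refine lt_of_le_of_lt (Polynomial.degree_sum_le _ _) ?_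
      rw [Finset.sup_lt_iff (by exact WithBot.bot_lt_coe m)]
      intro i _
      refine lt_of_le_of_lt ((Polynomial.degree_mul_le _ _).trans ?_) (hdeg i)
      calc Polynomial.degree (Polynomial.C (p.eval (z i))) + (ℓ i).degree
          ≤ 0 + (ℓ i).degree := add_le_add Polynomial.degree_C_le le_rfl
        _ = (ℓ i).degree := zero_add _
    have hz0 : ∀ k, q.eval (z k) = 0 := by
      intro k
      simp [hqdef, Polynomial.eval_finset_sum, hev]
    rcases eq_or_ne q 0 with h0 | h0
    · exact (sub_eq_zero.mp h0).symm
    · have := Polynomial.eq_zero_of_natDegree_lt_card_of_eval_eq_zero q hz hz0 ?_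
      · exact (sub_eq_zero.mp this).symm
      · rw [Fintype.card_fin]
        exact (Polynomial.natDegree_lt_iff_degree_lt h0).mpr hd
  conv_lhs => rw [h]
  simp [Polynomial.eval_finset_sum]

lemma gram_det_isUnit {m : ℕ} {c e : ℝ} (hce : c < e) (z : Fin m → ℝ)
    (ℓ : Fin m → Polynomial ℝ)
    (hev : ∀ i k, (ℓ i).eval (z k) = if i = k then 1 else 0)
    (M : Matrix (Fin m) (Fin m) ℝ)
    (hM : ∀ i j, M i j = ∫ t in c..e, (ℓ i).eval t * (ℓ j).eval t) :
    IsUnit M.det := by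
  have hherm : M.IsHermitian := by
    ext i j
    simp only [Matrix.conjTranspose_apply, star_trivial, hM, mul_comm]
  have hpd : M.PosDef := by
    refine ⟨hherm, fun v hv => ?_⟩
    set q : Polynomial ℝ := ∑ i, Polynomial.C (v i) * ℓ i with hqdef
    have hqe : ∀ t, q.eval t = ∑ i, v i * (ℓ i).eval t := by
      intro t; simp [hqdef, Polynomial.eval_finset_sum]
    have hdot1 : star v ⬝ᵥ (M *ᵥ v) = ∑ i, ∑ j, v i * v j * M i j := by
      simp only [star_trivial, dotProduct, Matrix.mulVec, Finset.mul_sum]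
      exact Finset.sum_congr rfl fun i _ => Finset.sum_congr rfl fun j _ => by ring
    have hint2 : ∀ i j : Fin m,
        (∫ t in c..e, (v i * (ℓ i).eval t) * (v j * (ℓ j).eval t)) = v i * v j * M i j := by
      intro i j
      rw [hM, ← intervalIntegral.integral_const_mul]
      exact intervalIntegral.integral_congr fun t _ => by ring
    have hcont : ∀ i j : Fin m, Continuous fun t => (v i * (ℓ i).eval t) * (v j * (ℓ j).eval t) :=
      fun i j => ((continuous_const.mul (ℓ i).continuous).mul
        (continuous_const.mul (ℓ j).continuous))
    have hdot2 : (∫ t in c..e, (q.eval t)^2) = ∑ i, ∑ j, v i * v j * M i j := by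
      have h1 : (fun t => (q.eval t)^2)
          = fun t => ∑ i, ∑ j, (v i * (ℓ i).eval t) * (v j * (ℓ j).eval t) := by
        funext t; rw [hqe, sq, Finset.sum_mul_sum]
      rw [h1, intervalIntegral.integral_finset_sum (fun i _ =>
        (continuous_finset_sum _ fun j _ => hcont i j).intervalIntegrable _ _)]
      refine Finset.sum_congr rfl fun i _ => ?_
      rw [intervalIntegral.integral_finset_sum (fun j _ => (hcont i j).intervalIntegrable _ _)]
      exact Finset.sum_congr rfl fun j _ => hint2 i j
    have hq0 : q ≠ 0 := by
      obtain ⟨i, hi⟩ := DFunLike.ne_iff.mp hv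
      intro h
      apply hi
      have h2 := hqe (z i)
      rw [h] at h2
      simpa [hev] using h2.symm
    have hpos : 0 < ∫ t in c..e, (q.eval t)^2 := by
      rw [intervalIntegral.integral_pos_iff_support_of_nonneg_ae
        (Filter.Eventually.of_forall fun t => sq_nonneg _)
        ((q.continuous.pow 2).intervalIntegrable _ _)]
      refine ⟨hce, ?_⟩
      have hroots : Set.Finite {t : ℝ | q.eval t = 0} := Polynomial.finite_setOf_isRoot hq0
      have hsub : Set.Ioc c e \ {t : ℝ | q.eval t = 0}
          ⊆ Function.support (fun t => (q.eval t)^2) ∩ Set.Ioc c e := by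
        intro t ht
        exact ⟨pow_ne_zero _ ht.2, ht.1⟩
      refine lt_of_lt_of_le ?_ (measure_mono hsub)
      rw [measure_diff_null (hroots.measure_zero _)]
      simpa [Real.volume_Ioc] using sub_pos.mpr hce
    have hfs : (v.sum fun i xi => v.sum fun j xj => star xi * M i j * xj)
        = ∑ i, ∑ j, v i * v j * M i j := by
      rw [Finsupp.sum_fintype _ _ (by simp)]
      refine Finset.sum_congr rfl fun i _ => ?_
      rw [Finsupp.sum_fintype _ _ (by simp)]
      refine Finset.sum_congr rfl fun j _ => ?_
      simp only [star_trivial]; ring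
    rw [hfs, ← hdot2]
    exact hpos
  exact isUnit_iff_ne_zero.mpr hpd.det_pos.ne'


/-- Accuracy of the combined interpolation from the refined elements R_1, …, R_F back to
the coarse element L: with I_{L→R_f} = M_{R_f}⁻¹ M_{LtoR_f} built by L² projection and
I_{R_f→L} = P_L⁻¹ (I_{L→R_f})ᵀ P_{R_f} its SBP-preserving adjoint, the combined action
on the restrictions of a polynomial p of degree at most d to the subinterval nodes
reproduces the values of p at the coarse nodes exactly. -/
theorem combined_interpolation_accuracy
    (F nL : ℕ) (hF : 0 < F) (hnL : 0 < nL)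
    (a : Fin (F + 1) → ℝ) (ha : StrictMono a)
    (x : Fin nL → ℝ) (hxmem : ∀ i, x i ∈ Set.Icc (a 0) (a (Fin.last F)))
    (hxinj : Function.Injective x)
    (ωL : Fin nL → ℝ) (hωL : ∀ i, 0 < ωL i)
    (n : Fin F → ℕ) (hn : ∀ f, 0 < n f)
    (y : (f : Fin F) → Fin (n f) → ℝ)
    (hymem : ∀ f i, y f i ∈ Set.Icc (a f.castSucc) (a f.succ))
    (hyinj : ∀ f, Function.Injective (y f))
    (ω : (f : Fin F) → Fin (n f) → ℝ) (hω : ∀ f i, 0 < ω f i)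
    (d : ℕ) (hdL : d + 1 ≤ nL) (hdf : ∀ f, d + 1 ≤ n f)
    (hquadL : ∀ q : Polynomial ℝ, q.natDegree ≤ nL - 1 + d →
      ∑ i, ωL i * q.eval (x i) = ∫ t in (a 0)..(a (Fin.last F)), q.eval t)
    (hquadR : ∀ (f : Fin F) (q : Polynomial ℝ), q.natDegree ≤ n f - 1 + d →
      ∑ i, ω f i * q.eval (y f i) = ∫ t in (a f.castSucc)..(a f.succ), q.eval t)
    (ℓx : Fin nL → Polynomial ℝ)
    (hℓxdeg : ∀ j, (ℓx j).degree < (nL : ℕ))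
    (hℓx : ∀ j k, (ℓx j).eval (x k) = if j = k then 1 else 0)
    (ℓy : (f : Fin F) → Fin (n f) → Polynomial ℝ)
    (hℓydeg : ∀ f i, (ℓy f i).degree < (n f : ℕ))
    (hℓy : ∀ f i k, (ℓy f i).eval (y f k) = if i = k then 1 else 0)
    (MR : (f : Fin F) → Matrix (Fin (n f)) (Fin (n f)) ℝ)
    (hMR : ∀ f i j, MR f i j
      = ∫ t in (a f.castSucc)..(a f.succ), (ℓy f i).eval t * (ℓy f j).eval t)
    (MLR : (f : Fin F) → Matrix (Fin (n f)) (Fin nL) ℝ)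
    (hMLR : ∀ f i j, MLR f i j
      = ∫ t in (a f.castSucc)..(a f.succ), (ℓy f i).eval t * (ℓx j).eval t)
    (ILR : (f : Fin F) → Matrix (Fin (n f)) (Fin nL) ℝ)
    (hILR : ∀ f, ILR f = (MR f)⁻¹ * MLR f)
    (IRL : (f : Fin F) → Matrix (Fin nL) (Fin (n f)) ℝ)
    (hIRL : ∀ f, IRL f = (Matrix.diagonal ωL)⁻¹ * (ILR f)ᵀ * Matrix.diagonal (ω f))
    (p : Polynomial ℝ) (hp : p.natDegree ≤ d) :
    ∑ f, (IRL f) *ᵥ (fun i => p.eval (y f i)) = fun j => p.eval (x j) := by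

  have hceR : ∀ f : Fin F, a f.castSucc < a f.succ := fun f => ha Fin.castSucc_lt_succ
  have hMRunit : ∀ f, IsUnit (MR f).det := fun f =>
    gram_det_isUnit (hceR f) (y f) (ℓy f) (hℓy f) (MR f) (hMR f)
  have hMRsym : ∀ f, (MR f)ᵀ = MR f := by
    intro f; ext i k
    simp only [Matrix.transpose_apply, hMR]
    exact intervalIntegral.integral_congr fun t _ => mul_comm _ _
  have hndbound : ∀ (r : Polynomial ℝ) (m : ℕ), r.degree < (m : ℕ) → r.natDegree ≤ m - 1 := by
    intro r m hr
    rcases eq_or_ne r 0 with h0 | h0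
    · simp [h0]
    · have := (Polynomial.natDegree_lt_iff_degree_lt h0).mpr hr
      omega
  have hndx : ∀ j, (ℓx j).natDegree ≤ nL - 1 := fun j => hndbound _ _ (hℓxdeg j)
  have hndy : ∀ f i, (ℓy f i).natDegree ≤ n f - 1 := fun f i => hndbound _ _ (hℓydeg f i)
  have hpdeg : ∀ m : ℕ, d + 1 ≤ m → p.degree < (m : ℕ) := by
    intro m hm
    calc p.degree ≤ (p.natDegree : WithBot ℕ) := Polynomial.degree_le_natDegree
      _ ≤ (d : WithBot ℕ) := by exact_mod_cast hp
      _ < (m : WithBot ℕ) := by exact_mod_cast hm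
  have hpy : ∀ (f : Fin F) t, p.eval t = ∑ i, p.eval (y f i) * (ℓy f i).eval t :=
    fun f t => lagrange_interp_eval (y f) (hyinj f) (ℓy f) (hℓydeg f) (hℓy f) p
      (hpdeg _ (hdf f)) t
  -- sum-integral swap helper
  have hswap : ∀ (f : Fin F) (g : Polynomial ℝ),
      (∑ k, (∫ t in (a f.castSucc)..(a f.succ), (ℓy f k).eval t * g.eval t)
        * p.eval (y f k))
      = ∫ t in (a f.castSucc)..(a f.succ), p.eval t * g.eval t := by
    intro f g
    have h1 : ∀ k : Fin (n f),
        (∫ t in (a f.castSucc)..(a f.succ), (ℓy f k).eval t * g.eval t) * p.eval (y f k)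
        = ∫ t in (a f.castSucc)..(a f.succ),
            (p.eval (y f k) * (ℓy f k).eval t) * g.eval t := by
      intro k
      rw [← intervalIntegral.integral_mul_const]
      exact intervalIntegral.integral_congr fun t _ => by ring
    rw [Finset.sum_congr rfl fun k _ => h1 k,
      ← intervalIntegral.integral_finset_sum
        (f := fun k t => p.eval (y f k) * (ℓy f k).eval t * g.eval t) (fun k _ =>
        (((continuous_const.mul (ℓy f k).continuous).mul g.continuous).intervalIntegrable _ _))]
    refine intervalIntegral.integral_congr fun t _ => ?_
    rw [← Finset.sum_mul, ← hpy f t]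
  -- (A) : MR f *ᵥ py = ω ∙ py
  have hA : ∀ f : Fin F, (MR f) *ᵥ (fun k => p.eval (y f k))
      = fun i => ω f i * p.eval (y f i) := by
    intro f
    funext i
    have hcol : ∀ k, MR f i k
        = ∫ t in (a f.castSucc)..(a f.succ), (ℓy f k).eval t * (ℓy f i).eval t := by
      intro k
      rw [hMR]
      exact intervalIntegral.integral_congr fun t _ => mul_comm _ _
    have : (MR f *ᵥ fun k => p.eval (y f k)) i
        = ∑ k, (∫ t in (a f.castSucc)..(a f.succ), (ℓy f k).eval t * (ℓy f i).eval t)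
            * p.eval (y f k) := by
      simp only [Matrix.mulVec, dotProduct]
      exact Finset.sum_congr rfl fun k _ => by rw [hcol]
    rw [this, hswap f (ℓy f i)]
    have hq := hquadR f (p * ℓy f i)
      (le_trans Polynomial.natDegree_mul_le (add_le_add hp (hndy f i)) |>.trans (by omega))
    have hql : ∑ k, ω f k * (p * ℓy f i).eval (y f k) = ω f i * p.eval (y f i) := by
      simp only [Polynomial.eval_mul, hℓy]
      rw [Finset.sum_congr rfl (fun k _ => by
        rw [show ω f k * (p.eval (y f k) * if i = k then (1:ℝ) else 0)
          = (if i = k then ω f k * p.eval (y f k) else 0) by split <;> simp])]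
      simp
    rw [← hql, hq]
    exact intervalIntegral.integral_congr fun t _ => by simp [Polynomial.eval_mul]
  have hinv : ∀ f : Fin F, (MR f)⁻¹ *ᵥ (fun i => ω f i * p.eval (y f i))
      = fun k => p.eval (y f k) := by
    intro f
    rw [← hA f, Matrix.mulVec_mulVec, Matrix.nonsing_inv_mul _ (hMRunit f), Matrix.one_mulVec]
  funext j
  rw [Finset.sum_apply]
  -- per-f term
  have hterm : ∀ f : Fin F, ((IRL f) *ᵥ fun i => p.eval (y f i)) j
      = (ωL j)⁻¹ * ∫ t in (a f.castSucc)..(a f.succ), p.eval t * (ℓx j).eval t := by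
    intro f
    rw [hIRL f, hILR f, Matrix.transpose_mul, Matrix.transpose_nonsing_inv, hMRsym f]
    have hsplit : ((Matrix.diagonal ωL)⁻¹ * ((MLR f)ᵀ * (MR f)⁻¹) * Matrix.diagonal (ω f))
        *ᵥ (fun i => p.eval (y f i))
        = (Matrix.diagonal ωL)⁻¹ *ᵥ ((MLR f)ᵀ *ᵥ ((MR f)⁻¹ *ᵥ
            (Matrix.diagonal (ω f) *ᵥ fun i => p.eval (y f i)))) := by
      simp only [Matrix.mulVec_mulVec, Matrix.mul_assoc]
    rw [hsplit]
    have hdiag : (Matrix.diagonal (ω f) *ᵥ fun i => p.eval (y f i))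
        = fun i => ω f i * p.eval (y f i) := by
      funext i; rw [Matrix.mulVec_diagonal]
    rw [hdiag, hinv f]
    have hBj : ((MLR f)ᵀ *ᵥ fun k => p.eval (y f k)) j
        = ∫ t in (a f.castSucc)..(a f.succ), p.eval t * (ℓx j).eval t := by
      have : ((MLR f)ᵀ *ᵥ fun k => p.eval (y f k)) j
          = ∑ k, (∫ t in (a f.castSucc)..(a f.succ), (ℓy f k).eval t * (ℓx j).eval t)
              * p.eval (y f k) := by
        simp only [Matrix.mulVec, dotProduct, Matrix.transpose_apply]
        exact Finset.sum_congr rfl fun k _ => by rw [hMLR]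
      rw [this, hswap f (ℓx j)]
    have hDL : (Matrix.diagonal ωL)⁻¹ = Matrix.diagonal (fun i => (ωL i)⁻¹) := by
      apply Matrix.inv_eq_right_inv
      rw [Matrix.diagonal_mul_diagonal]
      have : (fun i => ωL i * (ωL i)⁻¹) = fun _ : Fin nL => (1:ℝ) := by
        funext i; exact mul_inv_cancel₀ (hωL i).ne'
      rw [this, Matrix.diagonal_one]
    rw [hDL, Matrix.mulVec_diagonal, hBj]
  rw [Finset.sum_congr rfl fun f _ => hterm f, ← Finset.mul_sum]
  -- telescoping sum
  have htel : ∑ f : Fin F, (∫ t in (a f.castSucc)..(a f.succ), p.eval t * (ℓx j).eval t)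
      = ∫ t in (a 0)..(a (Fin.last F)), p.eval t * (ℓx j).eval t := by
    set g : ℝ → ℝ := fun t => p.eval t * (ℓx j).eval t with hg
    have hgc : Continuous g := p.continuous.mul (ℓx j).continuous
    set b : ℕ → ℝ := fun k => a ⟨min k F, Nat.lt_succ_of_le (min_le_right _ _)⟩ with hb
    have hb0 : b 0 = a 0 := by
      exact congrArg a (Fin.ext (by simp))
    have hbF : b F = a (Fin.last F) := by
      exact congrArg a (Fin.ext (by simp [Fin.last]))
    have hcast1 : ∀ f : Fin F, b f.1 = a f.castSucc := by
      intro f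
      exact congrArg a (Fin.ext (by simp [min_eq_left f.2.le]))
    have hcast2 : ∀ f : Fin F, b (f.1 + 1) = a f.succ := by
      intro f
      exact congrArg a (Fin.ext (by simp [min_eq_left (Nat.succ_le_of_lt f.2)]))
    have := intervalIntegral.sum_integral_adjacent_intervals
      (a := b) (n := F) (f := g) (μ := volume)
      (fun k hk => hgc.intervalIntegrable _ _)
    rw [hb0, hbF] at this
    rw [← this, ← Fin.sum_univ_eq_sum_range (fun k => ∫ t in b k..b (k+1), g t) F]
    exact Finset.sum_congr rfl fun f _ => by rw [hcast1 f, hcast2 f]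
  rw [htel]
  -- coarse quadrature
  have hq := hquadL (p * ℓx j)
    (le_trans Polynomial.natDegree_mul_le (add_le_add hp (hndx j)) |>.trans (by omega))
  have hql : ∑ i, ωL i * (p * ℓx j).eval (x i) = ωL j * p.eval (x j) := by
    simp only [Polynomial.eval_mul, hℓx]
    rw [Finset.sum_congr rfl (fun i _ => by
      rw [show ωL i * (p.eval (x i) * if j = i then (1:ℝ) else 0)
        = (if j = i then ωL i * p.eval (x i) else 0) by split <;> simp])]
    simp
  have hint : (∫ t in (a 0)..(a (Fin.last F)), p.eval t * (ℓx j).eval t)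
      = ωL j * p.eval (x j) := by
    rw [← hql, hq]
    exact intervalIntegral.integral_congr fun t _ => by simp [Polynomial.eval_mul]
  rw [hint, ← mul_assoc, inv_mul_cancel₀ (hωL j).ne', one_mul]
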